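/- Let Q ⊂ ℝ^d be a nonempty compact convex set with diameter D, let f : ℝ^d → ℝ be convex with L-Lipschitz gradient on Q, let δ ≥ 0, and for each k let g_δ(x_k) satisfy the δ-oracle condition |⟨g_δ(x_k) − ∇f(x_k), x_k − y⟩| ≤ δ for all y ∈ Q. Consider the Frank–Wolfe iterates x_{k+1} = x_k + ᾱ_k (x̃_k − x_k) with ᾱ_k ∈ [0,1) and x̃_k ∈ argmin_{x ∈ Q} ⟨g_δ(x_k), x − x_k⟩. Then for every k, f(x_{k+1}) − f* ≤ (1 − ᾱ_k)(f(x_k) − f*) + 2 ᾱ_k δ + (1/2) L D² ᾱ_k², where f* = min_{x ∈ Q} f(x). -/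

import Mathlib

open RealInnerProductSpace Filter Topology

section Aux

variable {F : Type*} [NormedAddCommGroup F] [InnerProductSpace ℝ F] [CompleteSpace F]

lemma line_hasDerivAt (f : F → ℝ) (x v : F) (t : ℝ)
    (hx : DifferentiableAt ℝ f (x + t • v)) :
    HasDerivAt (fun s : ℝ => f (x + s • v)) ⟪gradient f (x + t • v), v⟫ t := by
  have hline : HasDerivAt (fun s : ℝ => x + s • v) v t := by
    simpa using ((hasDerivAt_id t).smul_const v).const_add x
  have hg := hx.hasGradientAt
  rw [hasGradientAt_iff_hasFDerivAt] at hg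
  have := hg.comp_hasDerivAt t hline
  simpa [InnerProductSpace.toDual_apply_apply, Function.comp_def] using this

/-- First-order condition for convexity. -/
lemma convex_gradient_ineq (Q : Set F) (f : F → ℝ) (hconv : ConvexOn ℝ Q f)
    {a b : F} (ha : a ∈ Q) (hb : b ∈ Q) (hd : DifferentiableAt ℝ f a) :
    ⟪gradient f a, b - a⟫ ≤ f b - f a := by
  have hd0 : DifferentiableAt ℝ f (a + (0 : ℝ) • (b - a)) := by simpa using hd
  have hφ : HasDerivAt (fun s : ℝ => f (a + s • (b - a)))
      ⟪gradient f (a + (0:ℝ) • (b - a)), b - a⟫ 0 := line_hasDerivAt f a (b - a) 0 hd0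
  rw [hasDerivAt_iff_tendsto_slope] at hφ
  have h0 : (a + (0:ℝ) • (b - a)) = a := by simp
  rw [h0] at hφ
  have hmono : Tendsto (slope (fun s : ℝ => f (a + s • (b - a))) 0) (nhdsWithin 0 (Set.Ioi 0))
      (nhds ⟪gradient f a, b - a⟫) :=
    hφ.mono_left (nhdsWithin_mono 0 (fun t ht => ne_of_gt ht))
  refine le_of_tendsto hmono ?_
  filter_upwards [Ioc_mem_nhdsGT_of_mem (Set.mem_Ico.mpr ⟨le_refl (0:ℝ), one_pos⟩)] with t ht
  obtain ⟨ht0, ht1⟩ := ht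
  have hcomb : a + t • (b - a) = (1 - t) • a + t • b := by
    module
  have hle : f (a + t • (b - a)) ≤ (1 - t) * f a + t * f b := by
    rw [hcomb]
    exact hconv.2 ha hb (by linarith) (le_of_lt ht0) (by ring)
  have hslope : slope (fun s : ℝ => f (a + s • (b - a))) 0 t
      = (f (a + t • (b - a)) - f a) / t := by
    rw [slope_def_field]; simp
  rw [hslope, div_le_iff₀ ht0]
  nlinarith [hle]

/-- Descent lemma for functions with Lipschitz gradient on a convex set. -/
lemma descent_lemma (Q : Set F) (hQconv : Convex ℝ Q) (f : F → ℝ) (L : ℝ) (hL : 0 ≤ L)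
    (hdiff : ∀ x ∈ Q, DifferentiableAt ℝ f x)
    (hLip : ∀ x ∈ Q, ∀ y ∈ Q, ‖gradient f x - gradient f y‖ ≤ L * ‖x - y‖)
    {a b : F} (ha : a ∈ Q) (hb : b ∈ Q) :
    f b ≤ f a + ⟪gradient f a, b - a⟫ + L / 2 * ‖b - a‖ ^ 2 := by
  set v := b - a with hv
  have hpt : ∀ t ∈ Set.Icc (0:ℝ) 1, a + t • v ∈ Q := by
    intro t ht
    have := hQconv.add_smul_sub_mem ha hb ht
    simpa [hv] using this
  set G : ℝ → ℝ := fun t => f (a + t • v) - t * ⟪gradient f a, v⟫ - L / 2 * t ^ 2 * ‖v‖ ^ 2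
    with hG
  have hG' : ∀ t ∈ Set.Icc (0:ℝ) 1, HasDerivAt G
      (⟪gradient f (a + t • v), v⟫ - ⟪gradient f a, v⟫ - L * t * ‖v‖ ^ 2) t := by
    intro t ht
    have h1 : HasDerivAt (fun s : ℝ => f (a + s • v)) ⟪gradient f (a + t • v), v⟫ t :=
      line_hasDerivAt f a v t (hdiff _ (hpt t ht))
    have h2 : HasDerivAt (fun s : ℝ => s * ⟪gradient f a, v⟫) ⟪gradient f a, v⟫ t := by
      simpa using (hasDerivAt_id t).mul_const ⟪gradient f a, v⟫
    have h3 : HasDerivAt (fun s : ℝ => L / 2 * s ^ 2 * ‖v‖ ^ 2) (L * t * ‖v‖ ^ 2) t := by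
      have := ((hasDerivAt_pow 2 t).const_mul (L / 2)).mul_const (‖v‖ ^ 2)
      refine this.congr_deriv ?_
      rw [show (2:ℕ) - 1 = 1 from rfl]
      push_cast
      ring
    exact (h1.sub h2).sub h3
  have hGcont : ContinuousOn G (Set.Icc 0 1) :=
    fun t ht => (hG' t ht).continuousAt.continuousWithinAt
  obtain ⟨c, hc, hceq⟩ := exists_hasDerivAt_eq_slope G
    (fun t => ⟪gradient f (a + t • v), v⟫ - ⟪gradient f a, v⟫ - L * t * ‖v‖ ^ 2)
    one_pos hGcont (fun t ht => hG' t (Set.mem_Icc.mpr ⟨le_of_lt ht.1, le_of_lt ht.2⟩))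
  have hcQ : a + c • v ∈ Q := hpt c (Set.mem_Icc.mpr ⟨le_of_lt hc.1, le_of_lt hc.2⟩)
  have hder_nonpos : ⟪gradient f (a + c • v), v⟫ - ⟪gradient f a, v⟫ - L * c * ‖v‖ ^ 2 ≤ 0 := by
    have h1 : ⟪gradient f (a + c • v) - gradient f a, v⟫
        ≤ ‖gradient f (a + c • v) - gradient f a‖ * ‖v‖ := real_inner_le_norm _ _
    have h2 : ‖gradient f (a + c • v) - gradient f a‖ ≤ L * ‖(a + c • v) - a‖ :=
      hLip _ hcQ _ ha
    have h3 : ‖(a + c • v) - a‖ = c * ‖v‖ := by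
      simp [norm_smul, abs_of_pos hc.1]
    have h4 : ⟪gradient f (a + c • v) - gradient f a, v⟫
        = ⟪gradient f (a + c • v), v⟫ - ⟪gradient f a, v⟫ := inner_sub_left _ _ _
    have h5 : ‖gradient f (a + c • v) - gradient f a‖ * ‖v‖ ≤ (L * (c * ‖v‖)) * ‖v‖ := by
      rw [h3] at h2
      exact mul_le_mul_of_nonneg_right h2 (norm_nonneg v)
    have h6 : (L * (c * ‖v‖)) * ‖v‖ = L * c * ‖v‖ ^ 2 := by ring
    linarith
  have hG10 : G 1 ≤ G 0 := by
    have : G 1 - G 0 = (⟪gradient f (a + c • v), v⟫ - ⟪gradient f a, v⟫ - L * c * ‖v‖ ^ 2) := by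
      rw [hceq]; ring
    linarith
  have hb1 : a + (1:ℝ) • v = b := by simp [hv]
  have h0 : a + (0:ℝ) • v = a := by simp
  simp only [hG, hb1, h0] at hG10
  simp at hG10 ⊢
  linarith

end Aux

/-- One-step inequality for Frank–Wolfe with a δ-oracle on a convex smooth
objective: `f(x_{k+1}) - f* ≤ (1 - ᾱ_k)(f(x_k) - f*) + 2ᾱ_k δ + (L D²/2) ᾱ_k²`. -/
theorem frankWolfe_delta_oracle_one_step {d : ℕ}
    (Q : Set (EuclideanSpace ℝ (Fin d)))
    (hQne : Q.Nonempty) (hQcomp : IsCompact Q) (hQconv : Convex ℝ Q)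
    (f : EuclideanSpace ℝ (Fin d) → ℝ) (L δ : ℝ) (hδ : 0 ≤ δ)
    (hconv : ConvexOn ℝ Q f)
    (hdiff : ∀ x ∈ Q, DifferentiableAt ℝ f x)
    (hLip : ∀ x ∈ Q, ∀ y ∈ Q, ‖gradient f x - gradient f y‖ ≤ L * ‖x - y‖)
    (x xt g : ℕ → EuclideanSpace ℝ (Fin d)) (α : ℕ → ℝ)
    (hα : ∀ k, α k ∈ Set.Ico (0 : ℝ) 1)
    (hx0 : x 0 ∈ Q)
    (horacle : ∀ k, ∀ y ∈ Q, |⟪g k - gradient f (x k), x k - y⟫| ≤ δ)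
    (hxtQ : ∀ k, xt k ∈ Q)
    (hmin : ∀ k, ∀ y ∈ Q, ⟪g k, xt k - x k⟫ ≤ ⟪g k, y - x k⟫)
    (hupd : ∀ k, x (k + 1) = x k + α k • (xt k - x k)) :
    ∀ k, f (x (k + 1)) - sInf (f '' Q) ≤
      (1 - α k) * (f (x k) - sInf (f '' Q)) + 2 * α k * δ
        + (1 / 2) * L * (Metric.diam Q) ^ 2 * (α k) ^ 2 := by
  -- All iterates stay in Q
  have hxQ : ∀ k, x k ∈ Q := by
    intro k
    induction k with
    | zero => exact hx0
    | succ n ih =>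
      rw [hupd n]
      exact hQconv.add_smul_sub_mem ih (hxtQ n) ⟨(hα n).1, le_of_lt (hα n).2⟩
  -- continuity and minimizer
  have hcont : ContinuousOn f Q := fun z hz => (hdiff z hz).continuousAt.continuousWithinAt
  obtain ⟨xs, hxsQ, hxsmin⟩ := hQcomp.exists_isMinOn hQne hcont
  have hfs : sInf (f '' Q) = f xs := by
    apply le_antisymm
    · exact csInf_le (hQcomp.image_of_continuousOn hcont).bddBelow ⟨xs, hxsQ, rfl⟩
    · exact le_csInf (hQne.image f) (by rintro b ⟨z, hz, rfl⟩; exact hxsmin hz)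
  intro k
  rw [hfs]
  -- diameter bound
  have hdiam : ‖xt k - x k‖ ≤ Metric.diam Q := by
    have := Metric.dist_le_diam_of_mem hQcomp.isBounded (hxtQ k) (hxQ k)
    rwa [dist_eq_norm] at this
  have hdiam0 : (0:ℝ) ≤ Metric.diam Q := Metric.diam_nonneg
  have hαk0 := (hα k).1
  -- case split on L
  by_cases hL : 0 ≤ L
  · -- descent lemma
    have hxk1 : x (k+1) ∈ Q := hxQ (k+1)
    have hdesc := descent_lemma Q hQconv f L hL hdiff hLip (hxQ k) hxk1
    have hsub : x (k+1) - x k = α k • (xt k - x k) := by rw [hupd k]; abel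
    rw [hsub] at hdesc
    have hinner : ⟪gradient f (x k), α k • (xt k - x k)⟫
        = α k * ⟪gradient f (x k), xt k - x k⟫ := real_inner_smul_right _ _ _
    have hnorm : ‖α k • (xt k - x k)‖ ^ 2 = α k ^ 2 * ‖xt k - x k‖ ^ 2 := by
      rw [norm_smul]; simp [abs_of_nonneg hαk0]; ring
    -- oracle bounds
    have ho1 := horacle k (xt k) (hxtQ k)
    have ho2 := horacle k xs hxsQ
    have e1 : ⟪g k - gradient f (x k), x k - xt k⟫
        = ⟪g k, x k - xt k⟫ - ⟪gradient f (x k), x k - xt k⟫ := inner_sub_left _ _ _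
    have e2 : ⟪g k - gradient f (x k), x k - xs⟫
        = ⟪g k, x k - xs⟫ - ⟪gradient f (x k), x k - xs⟫ := inner_sub_left _ _ _
    have e3 : ⟪g k, x k - xt k⟫ = -⟪g k, xt k - x k⟫ := by
      rw [← inner_neg_right]; congr 1; abel
    have e4 : ⟪gradient f (x k), x k - xt k⟫ = -⟪gradient f (x k), xt k - x k⟫ := by
      rw [← inner_neg_right]; congr 1; abel
    have e5 : ⟪g k, x k - xs⟫ = -⟪g k, xs - x k⟫ := by
      rw [← inner_neg_right]; congr 1; abel
    have e6 : ⟪gradient f (x k), x k - xs⟫ = -⟪gradient f (x k), xs - x k⟫ := by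
      rw [← inner_neg_right]; congr 1; abel
    have hub1 : ⟪gradient f (x k), xt k - x k⟫ ≤ ⟪g k, xt k - x k⟫ + δ := by
      have := (abs_le.mp ho1).2
      rw [e1, e3, e4] at this; linarith
    have hub2 : ⟪g k, xs - x k⟫ ≤ ⟪gradient f (x k), xs - x k⟫ + δ := by
      have := (abs_le.mp ho2).1
      rw [e2, e5, e6] at this; linarith
    have hub3 : ⟪g k, xt k - x k⟫ ≤ ⟪g k, xs - x k⟫ := hmin k xs hxsQ
    have hub4 : ⟪gradient f (x k), xs - x k⟫ ≤ f xs - f (x k) :=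
      convex_gradient_ineq Q f hconv (hxQ k) hxsQ (hdiff _ (hxQ k))
    have hchain : ⟪gradient f (x k), xt k - x k⟫ ≤ f xs - f (x k) + 2 * δ := by
      linarith
    have hnormle : ‖xt k - x k‖ ^ 2 ≤ (Metric.diam Q) ^ 2 := by
      nlinarith [norm_nonneg (xt k - x k)]
    rw [hinner, hnorm] at hdesc
    have hA : α k * ⟪gradient f (x k), xt k - x k⟫ ≤ α k * (f xs - f (x k) + 2 * δ) :=
      mul_le_mul_of_nonneg_left hchain hαk0
    have hB : L / 2 * (α k ^ 2 * ‖xt k - x k‖ ^ 2)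
        ≤ L / 2 * (α k ^ 2 * (Metric.diam Q) ^ 2) := by
      have h7 : α k ^ 2 * ‖xt k - x k‖ ^ 2 ≤ α k ^ 2 * (Metric.diam Q) ^ 2 :=
        mul_le_mul_of_nonneg_left hnormle (sq_nonneg (α k))
      exact mul_le_mul_of_nonneg_left h7 (by linarith)
    nlinarith
  · -- L < 0 forces Q to be a subsingleton
    push_neg at hL
    have hsub : ∀ a ∈ Q, ∀ b ∈ Q, a = b := by
      intro a ha b hb
      by_contra hne
      have h1 := hLip a ha b hb
      have h2 : (0:ℝ) < ‖a - b‖ := norm_pos_iff.mpr (sub_ne_zero_of_ne hne)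
      nlinarith [norm_nonneg (gradient f a - gradient f b)]
    have hxx : x (k+1) = xs := hsub _ (hxQ (k+1)) _ hxsQ
    have hxk : x k = xs := hsub _ (hxQ k) _ hxsQ
    have hdQ : Metric.diam Q = 0 := by
      apply le_antisymm _ Metric.diam_nonneg
      apply Metric.diam_le_of_forall_dist_le le_rfl
      intro a ha b hb
      rw [hsub a ha b hb, dist_self]
    rw [hxx, hxk, hdQ]
    simp
    nlinarith
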